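/- Let Λ be a row-finite k-graph with no sources, let c be a bicharacter of ℤ^k, and let t be a Cuntz–Krieger (Λ, c∘d)-family in a C*-algebra. Let λ ∈ Λ with v := r(λ) ∈ H_Per, let m, m' ∈ Per(Λ), and choose p, q, p', q' ∈ ℕ^k with p − q = m and p' − q' = m'. Define V := Σ_{μ ∈ vΛ^p} t_λ t_λ* t_μ t_{θ_{p,q}(μ)}* and V' := Σ_{η ∈ vΛ^{p'}} t_λ t_λ* t_η t_{θ_{p',q'}(η)}*. Then V V' = c(m,m')·conj(c(m',m))·V' V. -/

import Mathlib

open scoped BigOperators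

/-- A `k`-graph: a countable category with degree functor `d : Λ → ℕ^k`
satisfying the factorisation property.  Composition `comp μ ν` is only
meaningful when `s μ = r ν`. -/
structure KGraph (k : ℕ) where
  Path : Type
  countable : Countable Path
  r : Path → Path
  s : Path → Path
  d : Path → (Fin k → ℕ)
  comp : Path → Path → Path
  d_r : ∀ l, d (r l) = 0
  d_s : ∀ l, d (s l) = 0
  r_of_vertex : ∀ v, d v = 0 → r v = v
  s_of_vertex : ∀ v, d v = 0 → s v = v
  id_comp : ∀ l, comp (r l) l = l
  comp_id : ∀ l, comp l (s l) = l
  r_comp : ∀ μ ν, s μ = r ν → r (comp μ ν) = r μ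
  s_comp : ∀ μ ν, s μ = r ν → s (comp μ ν) = s ν
  d_comp : ∀ μ ν, s μ = r ν → d (comp μ ν) = d μ + d ν
  comp_assoc : ∀ l μ ν, s l = r μ → s μ = r ν →
    comp (comp l μ) ν = comp l (comp μ ν)
  factor : ∀ (l : Path) (m n : Fin k → ℕ), d l = m + n →
    ∃! p : Path × Path, d p.1 = m ∧ d p.2 = n ∧ s p.1 = r p.2 ∧ comp p.1 p.2 = l

namespace KGraph

variable {k : ℕ} (G : KGraph k)

def IsVertex (v : G.Path) : Prop := G.d v = 0

/-- `MCE μ ν = μΛ ∩ νΛ ∩ Λ^{d μ ⊔ d ν}`. -/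
def MCE (μ ν : G.Path) : Set G.Path :=
  {l | G.d l = G.d μ ⊔ G.d ν ∧
      (∃ α, G.s μ = G.r α ∧ G.comp μ α = l) ∧
      (∃ β, G.s ν = G.r β ∧ G.comp ν β = l)}

def FinitelyAligned : Prop := ∀ μ ν : G.Path, (G.MCE μ ν).Finite

/-- `Ext(μ; E) = ⋃_{ν ∈ E} {α : μα ∈ MCE(μ,ν)}`. -/
def Ext (μ : G.Path) (E : Set G.Path) : Set G.Path :=
  {α | G.s μ = G.r α ∧ ∃ ν ∈ E, G.comp μ α ∈ G.MCE μ ν}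

/-- `Ext` computed relative to a sub-`k`-graph with path set `W`. -/
def ExtIn (W : Set G.Path) (μ : G.Path) (E : Set G.Path) : Set G.Path :=
  {α | G.s μ = G.r α ∧ ∃ ν ∈ E, G.comp μ α ∈ G.MCE μ ν ∩ W}

/-- `E` is exhaustive at `v` relative to the sub-`k`-graph with path set `W`. -/
def ExhaustiveIn (W : Set G.Path) (v : G.Path) (E : Set G.Path) : Prop :=
  ∀ l ∈ W, G.r l = v → ∃ μ ∈ E, (G.MCE l μ ∩ W).Nonempty

def Exhaustive (v : G.Path) (E : Set G.Path) : Prop := G.ExhaustiveIn Set.univ v E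

/-- Membership in `FE` of the sub-`k`-graph with path set `W`. -/
def IsFEIn (W : Set G.Path) (E : Set G.Path) : Prop :=
  E.Finite ∧ E ⊆ W ∧ (∀ μ ∈ E, ¬ G.IsVertex μ) ∧
    ∃ v, G.IsVertex v ∧ (∀ μ ∈ E, G.r μ = v) ∧ G.ExhaustiveIn W v E

def IsFE (E : Set G.Path) : Prop := G.IsFEIn Set.univ E

/-- A satiated collection of finite exhaustive sets, relative to the sub-`k`-graph `W`. -/
def SatiatedIn (W : Set G.Path) (Ε : Set (Set G.Path)) : Prop :=
  (∀ E ∈ Ε, G.IsFEIn W E) ∧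
  ∀ F ∈ Ε, ∀ v, G.IsVertex v → (∀ μ ∈ F, G.r μ = v) →
    ((∀ l ∈ W, G.r l = v → l ≠ v → insert l F ∈ Ε) ∧
     (∀ l ∈ W, G.r l = v →
        (¬ ∃ μ ∈ F, ∃ μ', G.s μ = G.r μ' ∧ G.comp μ μ' = l) →
        G.ExtIn W l F ∈ Ε) ∧
     (∀ lam lam', lam ∈ F → G.s lam = G.r lam' → G.comp lam lam' ∈ F →
        lam' ≠ G.s lam → F \ {G.comp lam lam'} ∈ Ε) ∧
     (∀ lam ∈ F, ∀ Gs ∈ Ε, (∀ μ ∈ Gs, G.r μ = G.s lam) →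
        ((F \ {lam}) ∪ (G.comp lam) '' Gs) ∈ Ε))

def Satiated (Ε : Set (Set G.Path)) : Prop := G.SatiatedIn Set.univ Ε

end KGraph

/-- A normalised `𝕋`-valued categorical `2`-cocycle on a `k`-graph, with the
circle realised as the norm-one complex numbers. -/
structure KGraph.Cocycle {k : ℕ} (G : KGraph k) where
  c : G.Path → G.Path → ℂ
  norm_one : ∀ μ ν, G.s μ = G.r ν → ‖c μ ν‖ = 1
  cocycle : ∀ l μ ν, G.s l = G.r μ → G.s μ = G.r ν →
    c l μ * c (G.comp l μ) ν = c μ ν * c l (G.comp μ ν)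
  left_id : ∀ l, c (G.r l) l = 1
  right_id : ∀ l, c l (G.s l) = 1

namespace KGraph

variable {k : ℕ} (G : KGraph k)

section CStar

variable {A : Type*} [NonUnitalNormedRing A] [StarRing A] [CStarRing A]
  [NormedSpace ℂ A] [IsScalarTower ℂ A A] [SMulCommClass ℂ A A]
  [StarModule ℂ A] [CompleteSpace A]

/-- Toeplitz–Cuntz–Krieger `(Λ, c)`-family. -/
def IsTCK (σ : G.Cocycle) (t : G.Path → A) : Prop :=
  (∀ v, G.IsVertex v → star (t v) = t v ∧ t v * t v = t v) ∧
  (∀ v w, G.IsVertex v → G.IsVertex w → v ≠ w → t v * t w = 0) ∧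
  (∀ μ ν, G.s μ = G.r ν → t μ * t ν = σ.c μ ν • t (G.comp μ ν)) ∧
  (∀ l, star (t l) * t l = t (G.s l)) ∧
  (∀ μ ν (F : Finset G.Path), (F : Set G.Path) = G.MCE μ ν →
    (t μ * star (t μ)) * (t ν * star (t ν)) = ∑ l ∈ F, t l * star (t l))

open scoped Classical in
/-- `Δ(t)^F = ∏_{l ∈ F} (q_v - q_l)`; the factors commute for a TCK family, so the
`noncommProd` below is the product from the paper.  The product is computed in the
unitization (with a harmless prefactor `q_v`, which acts as the identity on each
factor for a TCK family with `F ⊆ vΛ`), so that the empty product is `q_v`. -/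
noncomputable def Delta (t : G.Path → A) (v : G.Path) (F : Finset G.Path) : A :=
  if h : (F : Set G.Path).Pairwise (Function.onFun Commute fun l =>
      ((t v * star (t v) - t l * star (t l) : A) : Unitization ℂ A))
  then (((t v * star (t v) : A) : Unitization ℂ A) *
      F.noncommProd (fun l => ((t v * star (t v) - t l * star (t l) : A) : Unitization ℂ A)) h).snd
  else 0

/-- Relative Cuntz–Krieger `(Λ, c; Ε)`-family. -/
def IsRelCK (σ : G.Cocycle) (Ε : Set (Set G.Path)) (t : G.Path → A) : Prop :=
  G.IsTCK σ t ∧ ∀ (F : Finset G.Path) (v : G.Path), (F : Set G.Path) ∈ Ε →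
    G.IsVertex v → (∀ μ ∈ F, G.r μ = v) → G.Delta t v F = 0

/-- Cuntz–Krieger `(Λ, c)`-family (finitely aligned case). -/
def IsCK (σ : G.Cocycle) (t : G.Path → A) : Prop :=
  G.IsRelCK σ {E | G.IsFE E} t

/-- The `C*`-subalgebra of `A` generated by a family `t`, as a subset of `A`. -/
def cstarOf (t : G.Path → A) : Set A :=
  closure (↑(NonUnitalStarAlgebra.adjoin ℂ (Set.range t)) : Set A)

end CStar

/-- Row-finite with no sources: every `vΛ^n` is finite and nonempty. -/
def RowFiniteNoSources : Prop :=
  ∀ v, G.IsVertex v → ∀ n : Fin k → ℕ,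
    {l | G.r l = v ∧ G.d l = n}.Finite ∧ {l | G.r l = v ∧ G.d l = n}.Nonempty

section CStar2

variable {A : Type*} [NonUnitalNormedRing A] [StarRing A] [CStarRing A]
  [NormedSpace ℂ A] [IsScalarTower ℂ A A] [SMulCommClass ℂ A A]
  [StarModule ℂ A] [CompleteSpace A]

/-- Cuntz–Krieger family, row-finite no sources formulation:
`∑_{λ ∈ vΛ^n} t_λ t_λ* = t_v`. -/
def IsCKrf (σ : G.Cocycle) (t : G.Path → A) : Prop :=
  G.IsTCK σ t ∧ ∀ v (n : Fin k → ℕ) (F : Finset G.Path), G.IsVertex v →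
    (F : Set G.Path) = {l | G.r l = v ∧ G.d l = n} →
    ∑ l ∈ F, t l * star (t l) = t v

end CStar2

/-- A filter in a `k`-graph. -/
def IsFilter (S : Set G.Path) : Prop :=
  (∀ l, (∃ α, G.s l = G.r α ∧ G.comp l α ∈ S) → l ∈ S) ∧
  (∀ μ ∈ S, ∀ ν ∈ S, (G.MCE μ ν ∩ S).Nonempty)

/-- An ultrafilter: a filter meeting every `Λ^n`. -/
def IsUltrafilter (S : Set G.Path) : Prop :=
  G.IsFilter S ∧ ∀ n : Fin k → ℕ, ∃ l ∈ S, G.d l = n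

/-- `ℓ_μ(S) = {ν : νΛ ∩ μS ≠ ∅}`. -/
def lmap (μ : G.Path) (S : Set G.Path) : Set G.Path :=
  {ν | ∃ τ ∈ S, G.s μ = G.r τ ∧ ∃ α, G.s ν = G.r α ∧ G.comp ν α = G.comp μ τ}

/-- `μ ∼ ν`: `ℓ_μ(S) = ℓ_ν(S)` for every ultrafilter `S` with `r(S) = s(μ)`. -/
def PEquiv (μ ν : G.Path) : Prop :=
  ∀ S, G.IsUltrafilter S → G.s μ ∈ S → G.lmap μ S = G.lmap ν S

/-- `d` with values in `ℤ^k`. -/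
def dZ (l : G.Path) : Fin k → ℤ := fun i => (G.d l i : ℤ)

/-- `Per(Λ) ≤ ℤ^k`, generated by `{d(μ) - d(ν) : μ ∼ ν}`. -/
def PerGroup : AddSubgroup (Fin k → ℤ) :=
  AddSubgroup.closure
    {m | ∃ μ ν, G.s μ = G.s ν ∧ G.PEquiv μ ν ∧ m = G.dZ μ - G.dZ ν}

/-- The hereditary set `H_Per`. -/
def HPer : Set G.Path :=
  {v | G.IsVertex v ∧ ∀ m n : Fin k → ℕ,
    ((fun i => (m i : ℤ)) - fun i => (n i : ℤ)) ∈ G.PerGroup →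
    ∀ l, G.r l = v → G.d l = m →
      ∃ μ, G.r μ = v ∧ G.d μ = n ∧ G.s μ = G.s l ∧ G.PEquiv l μ}

end KGraph


namespace KGraph

variable {k : ℕ} (G : KGraph k)

section GraphLemmas

variable {G}

lemma vertex_s {l : G.Path} : G.IsVertex (G.s l) := G.d_s l

lemma vertex_r {l : G.Path} : G.IsVertex (G.r l) := G.d_r l

lemma r_s {l : G.Path} (h : G.IsVertex l) : G.r l = l := G.r_of_vertex l h

lemma s_v {l : G.Path} (h : G.IsVertex l) : G.s l = l := G.s_of_vertex l h

/-- Existence part of factorisation at a prescribed initial degree. -/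
lemma factor_exists (l : G.Path) (a : Fin k → ℕ) (h : a ≤ G.d l) :
    ∃ x y : G.Path, G.d x = a ∧ G.s x = G.r y ∧ G.comp x y = l := by
  obtain ⟨pq, hpq, -⟩ := G.factor l a (G.d l - a)
    (by funext i; have hi : a i ≤ G.d l i := h i; simp only [Pi.add_apply, Pi.sub_apply]; omega)
  exact ⟨pq.1, pq.2, hpq.1, hpq.2.2.1, hpq.2.2.2⟩

/-- Uniqueness of factorisations with the same initial degree. -/
lemma factor_unique {x y x' y' : G.Path} (hd : G.d x = G.d x')
    (hs : G.s x = G.r y) (hs' : G.s x' = G.r y')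
    (h : G.comp x y = G.comp x' y') : x = x' ∧ y = y' := by
  have hdy : G.d y = G.d y' := by
    have h1 := G.d_comp x y hs
    have h2 := G.d_comp x' y' hs'
    rw [h, h2, hd] at h1
    funext i
    have := congrFun h1 i
    simpa using this.symm
  obtain ⟨w, -, huniq⟩ := G.factor (G.comp x y) (G.d x) (G.d y) (G.d_comp x y hs)
  have e1 : (x, y) = (x', y') := by
    have u1 := huniq (x, y) ⟨rfl, rfl, hs, rfl⟩
    have u2 := huniq (x', y') ⟨hd.symm, hdy.symm, hs', h.symm⟩
    rw [u1, u2]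
  exact ⟨congrArg Prod.fst e1, congrArg Prod.snd e1⟩

/-- A path of degree `0` composed on the right acts as identity. -/
lemma comp_vertex {x α : G.Path} (hα : G.IsVertex α) (hs : G.s x = G.r α) :
    G.comp x α = x := by
  have : α = G.s x := by rw [hs, r_s hα]
  rw [this, G.comp_id]

/-- Nesting of initial segments: if `λα = ξγ` and `d λ ≤ d ξ` then `λ ≤ ξ`. -/
lemma prefix_nest {lam ξ α γ : G.Path} (hd : G.d lam ≤ G.d ξ)
    (hsl : G.s lam = G.r α) (hsx : G.s ξ = G.r γ)
    (h : G.comp lam α = G.comp ξ γ) :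
    ∃ β, G.s lam = G.r β ∧ G.comp lam β = ξ := by
  obtain ⟨x, y, hdx, hsxy, hxy⟩ := factor_exists ξ (G.d lam) hd
  have hcomp : G.comp lam α = G.comp x (G.comp y γ) := by
    rw [h, ← hxy, G.comp_assoc x y γ hsxy (by rw [← hxy] at hsx; rwa [G.s_comp x y hsxy] at hsx)]
  have hyγ : G.s x = G.r (G.comp y γ) := by
    rw [G.r_comp y γ (by rw [← hxy] at hsx; rwa [G.s_comp x y hsxy] at hsx)]; exact hsxy
  obtain ⟨hx, -⟩ := factor_unique (x := lam) (y := α) (x' := x) (y' := G.comp y γ)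
    hdx.symm hsl hyγ hcomp
  exact ⟨y, by rw [hx]; exact hsxy, by rw [hx]; exact hxy⟩

end GraphLemmas

end KGraph


namespace KGraph

section FilterLemmas

variable {k : ℕ} {G : KGraph k}

/-- All elements of a filter containing a vertex `w` have range `w`. -/
lemma range_const {S : Set G.Path} (hS : G.IsFilter S) {w : G.Path}
    (hw : G.IsVertex w) (hwS : w ∈ S) {x : G.Path} (hx : x ∈ S) : G.r x = w := by
  obtain ⟨ρ, ⟨hdρ, ⟨α, hα1, hα2⟩, ⟨β, hβ1, hβ2⟩⟩, -⟩ := hS.2 w hwS x hx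
  have hdρx : G.d ρ = G.d x := by
    rw [hdρ]; funext i
    have h0 : G.d w i = 0 := congrFun hw i
    simp [Pi.sup_apply, h0]
  have hβv : G.IsVertex β := by
    have hcc := G.d_comp x β hβ1
    rw [hβ2, hdρx] at hcc
    funext i
    have hc := congrFun hcc i
    simp only [Pi.add_apply] at hc
    simp only [Pi.zero_apply]
    omega
  have : ρ = x := by rw [← hβ2, comp_vertex hβv hβ1]
  rw [← this, ← hα2, G.r_comp w α hα1, r_s hw]

/-- Existence of an ultrafilter containing a given vertex. -/
lemma exists_ultrafilter (hrf : G.RowFiniteNoSources) {w : G.Path} (hw : G.IsVertex w) :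
    ∃ S : Set G.Path, G.IsUltrafilter S ∧ w ∈ S := by
  classical
  -- choose a degree-(1,…,1) extension of any path
  have hext : ∀ x : G.Path, ∃ e, G.r e = G.s x ∧ G.d e = fun _ => 1 := fun x =>
    (hrf (G.s x) vertex_s (fun _ => 1)).2
  choose e he1 he2 using hext
  -- the tower of paths
  let z : ℕ → G.Path := fun j => Nat.rec w (fun _ x => G.comp x (e x)) j
  have hz0 : z 0 = w := rfl
  have hzs : ∀ j, z (j + 1) = G.comp (z j) (e (z j)) := fun _ => rfl
  have hzr : ∀ j, G.r (z j) = w := by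
    intro j; induction j with
    | zero => exact r_s hw
    | succ j ih => rw [hzs, G.r_comp _ _ (he1 (z j)).symm]; exact ih
  have hzd : ∀ j, G.d (z j) = fun _ => j := by
    intro j; induction j with
    | zero => exact hw
    | succ j ih =>
      rw [hzs, G.d_comp _ _ (he1 (z j)).symm, ih, he2]
      funext i; simp
  -- z j is a prefix of z j' for j ≤ j'
  have hle : ∀ j j', j ≤ j' → ∃ γ, G.s (z j) = G.r γ ∧ G.comp (z j) γ = z j' := by
    intro j j' hjj'
    induction j' with
    | zero =>
      have : j = 0 := Nat.le_zero.mp hjj'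
      subst this
      exact ⟨G.s (z 0), (r_s vertex_s).symm, G.comp_id _⟩
    | succ j' ih =>
      rcases Nat.lt_or_ge j (j' + 1) with hlt | hge
      · obtain ⟨γ, hγ1, hγ2⟩ := ih (Nat.lt_succ_iff.mp hlt)
        have hsγ : G.s γ = G.r (e (z j')) := by
          rw [he1, ← hγ2, G.s_comp _ _ hγ1]
        refine ⟨G.comp γ (e (z j')), ?_, ?_⟩
        · rw [G.r_comp γ _ hsγ]; exact hγ1
        · rw [← G.comp_assoc _ _ _ hγ1 hsγ, hγ2, hzs]
      · have hj : j = j' + 1 := le_antisymm hjj' hge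
        subst hj
        exact ⟨G.s (z (j' + 1)), (r_s vertex_s).symm, G.comp_id _⟩
  -- the set of initial segments
  refine ⟨{ν | ∃ j α, G.s ν = G.r α ∧ G.comp ν α = z j}, ⟨⟨?_, ?_⟩, ?_⟩, ?_⟩
  · -- F1
    rintro l ⟨α, hα, j, β, hβ1, hβ2⟩
    refine ⟨j, G.comp α β, by rw [G.r_comp _ _ (by rw [← G.s_comp l α hα]; exact hβ1)]; exact hα, ?_⟩
    rw [← G.comp_assoc l α β hα (by rw [← G.s_comp l α hα]; exact hβ1)]
    exact hβ2
  · -- F2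
    rintro μ ⟨j₁, α, hα1, hα2⟩ ν ⟨j₂, β, hβ1, hβ2⟩
    set J := max j₁ j₂ with hJ
    obtain ⟨γ₁, hγ₁1, hγ₁2⟩ := hle j₁ J (le_max_left _ _)
    obtain ⟨γ₂, hγ₂1, hγ₂2⟩ := hle j₂ J (le_max_right _ _)
    have hμJ : G.comp μ (G.comp α γ₁) = z J := by
      rw [← G.comp_assoc μ α γ₁ hα1 (by rw [← G.s_comp μ α hα1, hα2]; exact hγ₁1), hα2]
      exact hγ₁2
    have hνJ : G.comp ν (G.comp β γ₂) = z J := by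
      rw [← G.comp_assoc ν β γ₂ hβ1 (by rw [← G.s_comp ν β hβ1, hβ2]; exact hγ₂1), hβ2]
      exact hγ₂2
    have hsμ : G.s μ = G.r (G.comp α γ₁) := by
      rw [G.r_comp α γ₁ (by rw [← G.s_comp μ α hα1, hα2]; exact hγ₁1)]; exact hα1
    have hsν : G.s ν = G.r (G.comp β γ₂) := by
      rw [G.r_comp β γ₂ (by rw [← G.s_comp ν β hβ1, hβ2]; exact hγ₂1)]; exact hβ1
    have hdμ : ∀ i, G.d μ i ≤ J := by
      intro i
      have h1 := congrFun (G.d_comp μ _ hsμ) i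
      rw [hμJ, hzd J] at h1
      simp only [Pi.add_apply] at h1
      omega
    have hdν : ∀ i, G.d ν i ≤ J := by
      intro i
      have h1 := congrFun (G.d_comp ν _ hsν) i
      rw [hνJ, hzd J] at h1
      simp only [Pi.add_apply] at h1
      omega
    obtain ⟨x, y, hdx, hsx, hxy⟩ := factor_exists (z J) (G.d μ ⊔ G.d ν)
      (fun i => by
        have h3 := sup_le (hdμ i) (hdν i)
        rw [hzd J]
        simpa [Pi.sup_apply] using h3)
    obtain ⟨β₁, hβ₁1, hβ₁2⟩ := prefix_nest (lam := μ) (ξ := x) (α := G.comp α γ₁) (γ := y)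
      (by rw [hdx]; exact le_sup_left)
      hsμ hsx (by rw [hμJ, hxy])
    obtain ⟨β₂, hβ₂1, hβ₂2⟩ := prefix_nest (lam := ν) (ξ := x) (α := G.comp β γ₂) (γ := y)
      (by rw [hdx]; exact le_sup_right)
      hsν hsx (by rw [hνJ, hxy])
    exact ⟨x, ⟨hdx, ⟨β₁, hβ₁1, hβ₁2⟩, ⟨β₂, hβ₂1, hβ₂2⟩⟩, J, y, hsx, hxy⟩
  · -- ultrafilter property
    intro n
    set J : ℕ := Finset.univ.sup n with hJdef
    have hn : n ≤ G.d (z J) := by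
      rw [hzd]; intro i; exact Finset.le_sup (Finset.mem_univ i)
    obtain ⟨x, y, hdx, hsx, hxy⟩ := factor_exists (z J) n hn
    exact ⟨x, ⟨J, y, hsx, hxy⟩, hdx⟩
  · -- w ∈ S
    exact ⟨0, w, by rw [s_v hw, r_s hw], by
      rw [hz0]; nth_rewrite 1 [← r_s hw]; exact G.id_comp w⟩

end FilterLemmas

end KGraph


namespace KGraph

section PequivLemmas

variable {k : ℕ} {G : KGraph k}

lemma lmap_ultrafilter {S : Set G.Path} {τ : G.Path} (hS : G.IsUltrafilter S)
    (hτS : G.s τ ∈ S) : G.IsUltrafilter (G.lmap τ S) ∧ G.r τ ∈ G.lmap τ S := by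
  have hrc : ∀ x ∈ S, G.r x = G.s τ := fun x hx => range_const hS.1 vertex_s hτS hx
  constructor
  · refine ⟨⟨?_, ?_⟩, ?_⟩
    · -- F1
      rintro l ⟨α, hslα, τ₁, hτ₁S, hrτ₁, β, hsβ, hβ⟩
      have hsαβ : G.s α = G.r β := by rw [← G.s_comp l α hslα]; exact hsβ
      refine ⟨τ₁, hτ₁S, hrτ₁, G.comp α β, ?_, ?_⟩
      · rw [G.r_comp α β hsαβ]; exact hslα
      · rw [← G.comp_assoc l α β hslα hsαβ]; exact hβ
    · -- F2
      rintro ν₁ ⟨τ₁, hτ₁S, hrτ₁, α₁, hsα₁, hα₁⟩ ν₂ ⟨τ₂, hτ₂S, hrτ₂, α₂, hsα₂, hα₂⟩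
      obtain ⟨sP, ⟨hds, ⟨γ₁, hγ₁1, hγ₁2⟩, ⟨γ₂, hγ₂1, hγ₂2⟩⟩, hsS⟩ :=
        hS.1.2 τ₁ hτ₁S τ₂ hτ₂S
      have hτsP : G.s τ = G.r sP := (hrc sP hsS).symm
      have hsαγ₁ : G.s α₁ = G.r γ₁ := by
        rw [← G.s_comp ν₁ α₁ hsα₁, hα₁, G.s_comp τ τ₁ hrτ₁]; exact hγ₁1
      have hsαγ₂ : G.s α₂ = G.r γ₂ := by
        rw [← G.s_comp ν₂ α₂ hsα₂, hα₂, G.s_comp τ τ₂ hrτ₂]; exact hγ₂1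
      have hν₁L : G.comp ν₁ (G.comp α₁ γ₁) = G.comp τ sP := by
        rw [← G.comp_assoc ν₁ α₁ γ₁ hsα₁ hsαγ₁, hα₁, G.comp_assoc τ τ₁ γ₁ hrτ₁ hγ₁1, hγ₁2]
      have hν₂L : G.comp ν₂ (G.comp α₂ γ₂) = G.comp τ sP := by
        rw [← G.comp_assoc ν₂ α₂ γ₂ hsα₂ hsαγ₂, hα₂, G.comp_assoc τ τ₂ γ₂ hrτ₂ hγ₂1, hγ₂2]
      have hsν₁' : G.s ν₁ = G.r (G.comp α₁ γ₁) := by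
        rw [G.r_comp α₁ γ₁ hsαγ₁]; exact hsα₁
      have hsν₂' : G.s ν₂ = G.r (G.comp α₂ γ₂) := by
        rw [G.r_comp α₂ γ₂ hsαγ₂]; exact hsα₂
      have hd₁ : ∀ i, G.d ν₁ i ≤ G.d (G.comp τ sP) i := fun i => by
        have h1 := congrFun (G.d_comp ν₁ _ hsν₁') i
        rw [hν₁L] at h1
        simp only [Pi.add_apply] at h1
        omega
      have hd₂ : ∀ i, G.d ν₂ i ≤ G.d (G.comp τ sP) i := fun i => by
        have h1 := congrFun (G.d_comp ν₂ _ hsν₂') i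
        rw [hν₂L] at h1
        simp only [Pi.add_apply] at h1
        omega
      obtain ⟨x, y, hdx, hsx, hxy⟩ := factor_exists (G.comp τ sP) (G.d ν₁ ⊔ G.d ν₂)
        (fun i => by simpa [Pi.sup_apply] using sup_le (hd₁ i) (hd₂ i))
      obtain ⟨β₁, hβ₁1, hβ₁2⟩ := prefix_nest (lam := ν₁) (ξ := x) (α := G.comp α₁ γ₁) (γ := y)
        (by rw [hdx]; exact le_sup_left) hsν₁' hsx (by rw [hν₁L, hxy])
      obtain ⟨β₂, hβ₂1, hβ₂2⟩ := prefix_nest (lam := ν₂) (ξ := x) (α := G.comp α₂ γ₂) (γ := y)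
        (by rw [hdx]; exact le_sup_right) hsν₂' hsx (by rw [hν₂L, hxy])
      exact ⟨x, ⟨hdx, ⟨β₁, hβ₁1, hβ₁2⟩, ⟨β₂, hβ₂1, hβ₂2⟩⟩, sP, hsS, hτsP, y, hsx, hxy⟩
    · -- ultra
      intro n
      obtain ⟨τ₀, hτ₀S, hdτ₀⟩ := hS.2 ((n ⊔ G.d τ) - G.d τ)
      have hcmp : G.s τ = G.r τ₀ := (hrc τ₀ hτ₀S).symm
      have hn : n ≤ G.d (G.comp τ τ₀) := by
        intro i
        rw [G.d_comp τ τ₀ hcmp, hdτ₀]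
        simp only [Pi.add_apply, Pi.sub_apply, Pi.sup_apply]
        omega
      obtain ⟨x, y, hdx, hsx, hxy⟩ := factor_exists (G.comp τ τ₀) n hn
      exact ⟨x, ⟨τ₀, hτ₀S, hcmp, y, hsx, hxy⟩, hdx⟩
  · exact ⟨G.s τ, hτS, (r_s vertex_s).symm, τ, s_v vertex_r, by rw [G.id_comp, G.comp_id]⟩

lemma lmap_comp {μ τ : G.Path} {S : Set G.Path} (hsμτ : G.s μ = G.r τ)
    (hS : G.IsUltrafilter S) (hτS : G.s τ ∈ S) :
    G.lmap (G.comp μ τ) S = G.lmap μ (G.lmap τ S) := by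
  ext x
  constructor
  · rintro ⟨τ₁, hτ₁S, hr, α, hsα, hα⟩
    have hsττ₁ : G.s τ = G.r τ₁ := by rw [← G.s_comp μ τ hsμτ]; exact hr
    refine ⟨G.comp τ τ₁, ⟨τ₁, hτ₁S, hsττ₁, G.s (G.comp τ τ₁), (r_s vertex_s).symm,
      G.comp_id _⟩, ?_, α, hsα, ?_⟩
    · rw [G.r_comp τ τ₁ hsττ₁]; exact hsμτ
    · rw [G.comp_assoc μ τ τ₁ hsμτ hsττ₁] at hα; exact hα
  · rintro ⟨ρ, ⟨τ₁, hτ₁S, hsττ₁, β, hsρβ, hρβ⟩, hsμρ, α, hsxα, hxα⟩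
    have hsαβ : G.s α = G.r β := by
      rw [← G.s_comp x α hsxα, hxα, G.s_comp μ ρ hsμρ]; exact hsρβ
    refine ⟨τ₁, hτ₁S, by rw [G.s_comp μ τ hsμτ]; exact hsττ₁, G.comp α β, ?_, ?_⟩
    · rw [G.r_comp α β hsαβ]; exact hsxα
    · rw [← G.comp_assoc x α β hsxα hsαβ, hxα, G.comp_assoc μ ρ β hsμρ hsρβ, hρβ,
        ← G.comp_assoc μ τ τ₁ hsμτ hsττ₁]

lemma pequiv_comp {μ ν τ : G.Path} (h : G.PEquiv μ ν) (hsμν : G.s μ = G.s ν)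
    (hsμτ : G.s μ = G.r τ) : G.PEquiv (G.comp μ τ) (G.comp ν τ) := by
  intro S hS hmem
  rw [G.s_comp μ τ hsμτ] at hmem
  rw [lmap_comp hsμτ hS hmem, lmap_comp (by rw [← hsμν]; exact hsμτ) hS hmem]
  obtain ⟨hU, hrτ⟩ := lmap_ultrafilter hS hmem
  exact h _ hU (by rw [hsμτ]; exact hrτ)

lemma pequiv_eq (hrf : G.RowFiniteNoSources) {μ ν : G.Path} (h : G.PEquiv μ ν)
    (hd : G.d μ = G.d ν) (hs : G.s μ = G.s ν) : μ = ν := by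
  obtain ⟨S, hS, hmem⟩ := exists_ultrafilter hrf (vertex_s (l := μ))
  have h1 : μ ∈ G.lmap μ S :=
    ⟨G.s μ, hmem, (r_s vertex_s).symm, G.s μ, (r_s vertex_s).symm, rfl⟩
  rw [h S hS hmem] at h1
  obtain ⟨τ, hτS, hsντ, α, hsμα, hα⟩ := h1
  exact (factor_unique hd hsμα hsντ hα).1

lemma prefix_transfer (hrf : G.RowFiniteNoSources) {lam ν ν' : G.Path}
    (hp : G.PEquiv ν ν') (hd : G.d lam ≤ G.d ν')
    (h : ∃ β, G.s lam = G.r β ∧ G.comp lam β = ν) :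
    ∃ β, G.s lam = G.r β ∧ G.comp lam β = ν' := by
  obtain ⟨β, hβ1, hβ2⟩ := h
  obtain ⟨S, hS, hmem⟩ := exists_ultrafilter hrf (vertex_s (l := ν))
  have h1 : lam ∈ G.lmap ν S :=
    ⟨G.s ν, hmem, (r_s vertex_s).symm, β, hβ1, by rw [G.comp_id]; exact hβ2⟩
  rw [hp S hS hmem] at h1
  obtain ⟨τ, hτS, hsν'τ, α, hslα, hα⟩ := h1
  exact prefix_nest hd hslα hsν'τ hα

lemma pequiv_symm {μ ν : G.Path} (h : G.PEquiv μ ν) (hs : G.s μ = G.s ν) :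
    G.PEquiv ν μ := fun S hS hm => (h S hS (by rw [hs]; exact hm)).symm

lemma pequiv_trans {μ ν ρ : G.Path} (h1 : G.PEquiv μ ν) (h2 : G.PEquiv ν ρ)
    (hs : G.s μ = G.s ν) : G.PEquiv μ ρ := fun S hS hm =>
  (h1 S hS hm).trans (h2 S hS (by rw [← hs]; exact hm))

end PequivLemmas

end KGraph


namespace KGraph

lemma norm_one_conj_mul {z : ℂ} (h : ‖z‖ = 1) : (starRingEnd ℂ) z * z = 1 := by
  have h2 : Complex.normSq z = 1 := by
    rw [Complex.normSq_eq_norm_sq, h, one_pow]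
  rw [mul_comm, Complex.mul_conj, h2, Complex.ofReal_one]

section CStarLemmas

variable {k : ℕ} {G : KGraph k}
variable {A : Type*} [NonUnitalNormedRing A] [StarRing A] [CStarRing A]
  [NormedSpace ℂ A] [IsScalarTower ℂ A A] [SMulCommClass ℂ A A]
  [StarModule ℂ A] [CompleteSpace A]
variable {σ : G.Cocycle} {t : G.Path → A}

lemma t_mul_s (htck : G.IsTCK σ t) (μ : G.Path) : t μ * t (G.s μ) = t μ := by
  have h := htck.2.2.1 μ (G.s μ) (r_s vertex_s).symm
  rw [h, G.comp_id, σ.right_id, one_smul]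

lemma r_mul_t (htck : G.IsTCK σ t) (μ : G.Path) : t (G.r μ) * t μ = t μ := by
  have h := htck.2.2.1 (G.r μ) μ (s_v vertex_r)
  rw [h, G.id_comp, σ.left_id, one_smul]

lemma ts_mul_star (htck : G.IsTCK σ t) (μ : G.Path) :
    t (G.s μ) * star (t μ) = star (t μ) := by
  conv_lhs => rw [← (htck.1 _ vertex_s).1, ← star_mul, t_mul_s htck μ]

lemma star_mul_of_mce_empty (htck : G.IsTCK σ t) {μ ν : G.Path}
    (hMCE : G.MCE μ ν = ∅) : star (t μ) * t ν = 0 := by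
  have h4 := htck.2.2.2.2 μ ν ∅ (by rw [hMCE]; simp)
  rw [Finset.sum_empty] at h4
  have e1 : star (t μ) * (t μ * star (t μ)) = star (t μ) := by
    rw [← mul_assoc, htck.2.2.2.1 μ, ts_mul_star htck μ]
  have e2 : (t ν * star (t ν)) * t ν = t ν := by
    rw [mul_assoc, htck.2.2.2.1 ν, t_mul_s htck ν]
  calc star (t μ) * t ν
      = (star (t μ) * (t μ * star (t μ))) * ((t ν * star (t ν)) * t ν) := by rw [e1, e2]
    _ = star (t μ) * (((t μ * star (t μ)) * (t ν * star (t ν))) * t ν) := by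
        rw [mul_assoc, ← mul_assoc (t μ * star (t μ))]
    _ = 0 := by rw [h4, zero_mul, mul_zero]

lemma mce_empty_of_ne {μ ν : G.Path} (hd : G.d μ = G.d ν) (hne : μ ≠ ν) :
    G.MCE μ ν = ∅ := by
  ext ρ
  simp only [Set.mem_empty_iff_false, iff_false]
  rintro ⟨hdρ, ⟨α, hα1, hα2⟩, ⟨β, hβ1, hβ2⟩⟩
  have hdρμ : G.d ρ = G.d μ := by rw [hdρ, hd, sup_idem]
  have hαv : G.IsVertex α := by
    have h1 := G.d_comp μ α hα1
    rw [hα2, hdρμ] at h1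
    funext i
    have := congrFun h1 i
    simp only [Pi.add_apply, Pi.zero_apply] at this ⊢
    omega
  have hβv : G.IsVertex β := by
    have h1 := G.d_comp ν β hβ1
    rw [hβ2, hdρμ, hd] at h1
    funext i
    have := congrFun h1 i
    simp only [Pi.add_apply, Pi.zero_apply] at this ⊢
    omega
  exact hne (by rw [← comp_vertex hαv hα1, hα2, ← hβ2, comp_vertex hβv hβ1])

lemma mce_empty_of_not_prefix {lam ν : G.Path} (hd : G.d lam ≤ G.d ν)
    (hnp : ¬ ∃ β, G.s lam = G.r β ∧ G.comp lam β = ν) : G.MCE lam ν = ∅ := by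
  ext ρ
  simp only [Set.mem_empty_iff_false, iff_false]
  rintro ⟨hdρ, ⟨α, hα1, hα2⟩, ⟨β, hβ1, hβ2⟩⟩
  have hdρν : G.d ρ = G.d ν := by rw [hdρ, sup_eq_right.2 hd]
  have hβv : G.IsVertex β := by
    have h1 := G.d_comp ν β hβ1
    rw [hβ2, hdρν] at h1
    funext i
    have := congrFun h1 i
    simp only [Pi.add_apply, Pi.zero_apply] at this ⊢
    omega
  exact hnp ⟨α, hα1, by rw [hα2, ← hβ2, comp_vertex hβv hβ1]⟩

lemma star_mul_of_ne (htck : G.IsTCK σ t) {μ ν : G.Path} (hd : G.d μ = G.d ν)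
    (hne : μ ≠ ν) : star (t μ) * t ν = 0 :=
  star_mul_of_mce_empty htck (mce_empty_of_ne hd hne)

lemma t_comp (htck : G.IsTCK σ t) {μ ν : G.Path} (hs : G.s μ = G.r ν) :
    t (G.comp μ ν) = (starRingEnd ℂ) (σ.c μ ν) • (t μ * t ν) := by
  rw [htck.2.2.1 μ ν hs, smul_smul, norm_one_conj_mul (σ.norm_one μ ν hs), one_smul]

lemma star_mul_of_prefix (htck : G.IsTCK σ t) {lam β ν : G.Path}
    (hβ1 : G.s lam = G.r β) (hβ2 : G.comp lam β = ν) :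
    star (t lam) * t ν = (starRingEnd ℂ) (σ.c lam β) • t β := by
  rw [← hβ2, t_comp htck hβ1, mul_smul_comm, ← mul_assoc, htck.2.2.2.1 lam, hβ1, r_mul_t htck β]

lemma q_mul_t_of_prefix (htck : G.IsTCK σ t) {lam β ν : G.Path}
    (hβ1 : G.s lam = G.r β) (hβ2 : G.comp lam β = ν) :
    (t lam * star (t lam)) * t ν = t ν := by
  rw [mul_assoc, star_mul_of_prefix htck hβ1 hβ2, mul_smul_comm,
    htck.2.2.1 lam β hβ1, hβ2, smul_smul, norm_one_conj_mul (σ.norm_one lam β hβ1), one_smul]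

lemma q_mul_t_of_not_prefix (htck : G.IsTCK σ t) {lam ν : G.Path} (hd : G.d lam ≤ G.d ν)
    (hnp : ¬ ∃ β, G.s lam = G.r β ∧ G.comp lam β = ν) :
    (t lam * star (t lam)) * t ν = 0 := by
  rw [mul_assoc, star_mul_of_mce_empty htck (mce_empty_of_not_prefix hd hnp), mul_zero]

end CStarLemmas

end KGraph


namespace KGraph

set_option linter.unusedSectionVars false

/-- A "graded unitary family" datum: `th` maps `vΛ^a` to `vΛ^b` respecting sources and `∼`. -/
def ThFam {k : ℕ} (G : KGraph k) (v : G.Path) (a b : Fin k → ℕ) (th : G.Path → G.Path) : Prop :=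
  ∀ μ : G.Path, G.r μ = v → G.d μ = a →
    G.r (th μ) = v ∧ G.d (th μ) = b ∧ G.s (th μ) = G.s μ ∧ G.PEquiv μ (th μ)

open Classical in
/-- Extension of `th` to paths of larger degree: `Θ(μτ) = th(μ)τ` where `d μ = a`. -/
noncomputable def thExt {k : ℕ} (G : KGraph k) (th : G.Path → G.Path) (a : Fin k → ℕ)
    (ν : G.Path) : G.Path :=
  if h : ∃ xy : G.Path × G.Path, G.d xy.1 = a ∧ G.s xy.1 = G.r xy.2 ∧ G.comp xy.1 xy.2 = ν then
    G.comp (th h.choose.1) h.choose.2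
  else ν

section ThExtLemmas

variable {k : ℕ} {G : KGraph k}

lemma thExt_comp (th : G.Path → G.Path) (a : Fin k → ℕ) {μ τ : G.Path}
    (hdμ : G.d μ = a) (hs : G.s μ = G.r τ) :
    G.thExt th a (G.comp μ τ) = G.comp (th μ) τ := by
  have hex : ∃ xy : G.Path × G.Path,
      G.d xy.1 = a ∧ G.s xy.1 = G.r xy.2 ∧ G.comp xy.1 xy.2 = G.comp μ τ :=
    ⟨(μ, τ), hdμ, hs, rfl⟩
  rw [thExt, dif_pos hex]
  obtain ⟨h1, h2, h3⟩ := hex.choose_spec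
  obtain ⟨hx, hy⟩ := factor_unique (h1.trans hdμ.symm) h2 hs h3
  rw [hx, hy]

lemma thExt_fam {v : G.Path} {a b : Fin k → ℕ} (n : Fin k → ℕ) {th : G.Path → G.Path}
    (hth : G.ThFam v a b th) : G.ThFam v (a + n) (b + n) (G.thExt th a) := by
  intro ν hrν hdν
  obtain ⟨x, y, hdx, hsx, hxy⟩ := factor_exists ν a
    (by rw [hdν]; intro i; simp only [Pi.add_apply]; exact Nat.le_add_right _ _)
  have hrx : G.r x = v := by rw [← G.r_comp x y hsx, hxy]; exact hrν
  obtain ⟨hr1, hd1, hs1, hp1⟩ := hth x hrx hdx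
  have hdy : G.d y = n := by
    have h1 := G.d_comp x y hsx
    rw [hxy, hdν, hdx] at h1
    funext i
    have := congrFun h1 i
    simp only [Pi.add_apply] at this
    omega
  have hsθy : G.s (th x) = G.r y := by rw [hs1]; exact hsx
  rw [← hxy, thExt_comp th a hdx hsx]
  refine ⟨?_, ?_, ?_, ?_⟩
  · rw [G.r_comp _ y hsθy]; exact hr1
  · rw [G.d_comp _ y hsθy, hd1, hdy]
  · rw [G.s_comp _ y hsθy, G.s_comp x y hsx]
  · exact pequiv_comp hp1 hs1.symm hsx

end ThExtLemmas

section BigLemmas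

variable {k : ℕ} {G : KGraph k}
variable {A : Type*} [NonUnitalNormedRing A] [StarRing A] [CStarRing A]
  [NormedSpace ℂ A] [IsScalarTower ℂ A A] [SMulCommClass ℂ A A]
  [StarModule ℂ A] [CompleteSpace A]
variable {σ : G.Cocycle} {t : G.Path → A}
variable {c : (Fin k → ℤ) → (Fin k → ℤ) → ℂ}

/-- Level-raising identity for the partial unitaries. -/
lemma level_raise (hrf : G.RowFiniteNoSources) (hck : G.IsCKrf σ t)
    (hσ : ∀ μ ν : G.Path, σ.c μ ν = c (G.dZ μ) (G.dZ ν))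
    (hc_norm : ∀ m n : Fin k → ℤ, ‖c m n‖ = 1)
    (hc_add_left : ∀ m m' n : Fin k → ℤ, c (m + m') n = c m n * c m' n)
    {v : G.Path} (hv : G.IsVertex v) (a b n : Fin k → ℕ) {th : G.Path → G.Path}
    (hth : G.ThFam v a b th)
    (Fa Fan : Finset G.Path) (hFa : (Fa : Set G.Path) = {l | G.r l = v ∧ G.d l = a})
    (hFan : (Fan : Set G.Path) = {l | G.r l = v ∧ G.d l = a + n}) :
    ∑ ν ∈ Fan, t ν * star (t (G.thExt th a ν)) =
      (starRingEnd ℂ) (c ((fun i => (a i : ℤ)) - fun i => (b i : ℤ)) (fun i => (n i : ℤ))) •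
        ∑ μ ∈ Fa, t μ * star (t (th μ)) := by
  classical
  have htck := hck.1
  have hmemFa : ∀ {l : G.Path}, l ∈ Fa ↔ G.r l = v ∧ G.d l = a := fun {l} => by
    rw [← Finset.mem_coe, hFa]; exact Iff.rfl
  have hmemFan : ∀ {l : G.Path}, l ∈ Fan ↔ G.r l = v ∧ G.d l = a + n := fun {l} => by
    rw [← Finset.mem_coe, hFan]; exact Iff.rfl
  set Fsrc : G.Path → Finset G.Path := fun μ => (hrf (G.s μ) vertex_s n).1.toFinset with hFsrc
  have hmemFsrc : ∀ {μ τ : G.Path}, τ ∈ Fsrc μ ↔ G.r τ = G.s μ ∧ G.d τ = n := fun {μ τ} => by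
    rw [hFsrc]; simp [Set.Finite.mem_toFinset]
  have hcover : Fan = Fa.biUnion (fun μ => (Fsrc μ).image (G.comp μ)) := by
    ext l
    simp only [Finset.mem_biUnion, Finset.mem_image]
    constructor
    · intro hl
      obtain ⟨hrl, hdl⟩ := hmemFan.mp hl
      obtain ⟨x, y, hdx, hsx, hxy⟩ := factor_exists l a
        (by rw [hdl]; intro i; simp only [Pi.add_apply]; exact Nat.le_add_right _ _)
      have hrx : G.r x = v := by rw [← G.r_comp x y hsx, hxy]; exact hrl
      have hdy : G.d y = n := by
        have h1 := G.d_comp x y hsx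
        rw [hxy, hdl, hdx] at h1
        funext i
        have := congrFun h1 i
        simp only [Pi.add_apply] at this
        omega
      exact ⟨x, hmemFa.mpr ⟨hrx, hdx⟩, y, hmemFsrc.mpr ⟨hsx.symm, hdy⟩, hxy⟩
    · rintro ⟨μ, hμ, τ, hτ, rfl⟩
      obtain ⟨hrμ, hdμ⟩ := hmemFa.mp hμ
      obtain ⟨hrτ, hdτ⟩ := hmemFsrc.mp hτ
      refine hmemFan.mpr ⟨?_, ?_⟩
      · rw [G.r_comp μ τ hrτ.symm]; exact hrμ
      · rw [G.d_comp μ τ hrτ.symm, hdμ, hdτ]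
  have hdisj : (Fa : Set G.Path).PairwiseDisjoint
      (fun μ => (Fsrc μ).image (G.comp μ)) := by
    intro μ hμ μ' hμ' hne
    refine Finset.disjoint_left.mpr ?_
    rintro x hx hx'
    obtain ⟨τ, hτ, hcτ⟩ := Finset.mem_image.mp hx
    obtain ⟨τ', hτ', hcτ'⟩ := Finset.mem_image.mp hx'
    rw [hFa] at hμ hμ'
    have hd : G.d μ = G.d μ' := by rw [hμ.2, hμ'.2]
    exact hne (factor_unique hd (hmemFsrc.mp hτ).1.symm (hmemFsrc.mp hτ').1.symm
      (by rw [hcτ, hcτ'])).1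
  rw [hcover, Finset.sum_biUnion hdisj, Finset.smul_sum]
  apply Finset.sum_congr rfl
  intro μ hμ
  obtain ⟨hrμ, hdμ⟩ := hmemFa.mp hμ
  obtain ⟨hrθ, hdθ, hsθ, -⟩ := hth μ hrμ hdμ
  have hinj : Set.InjOn (G.comp μ) (Fsrc μ) := by
    intro τ₁ h₁ τ₂ h₂ hc12
    exact (factor_unique rfl (hmemFsrc.mp (by exact h₁)).1.symm
      (hmemFsrc.mp (by exact h₂)).1.symm hc12).2
  rw [Finset.sum_image hinj]
  set K := (starRingEnd ℂ)
      (c ((fun i => (a i : ℤ)) - fun i => (b i : ℤ)) (fun i => (n i : ℤ))) with hK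
  have hterm : ∀ τ ∈ Fsrc μ, t (G.comp μ τ) * star (t (G.thExt th a (G.comp μ τ))) =
      K • (t μ * (t τ * star (t τ)) * star (t (th μ))) := by
    intro τ hτ
    obtain ⟨hrτ, hdτ⟩ := hmemFsrc.mp hτ
    have hsμτ : G.s μ = G.r τ := hrτ.symm
    have hsθτ : G.s (th μ) = G.r τ := by rw [hsθ]; exact hsμτ
    have hscal : (starRingEnd ℂ) (σ.c μ τ) * σ.c (th μ) τ = K := by
      have hdZμ : G.dZ μ = (fun i => (a i : ℤ)) := by funext i; rw [dZ, hdμ]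
      have hdZθ : G.dZ (th μ) = (fun i => (b i : ℤ)) := by funext i; rw [dZ, hdθ]
      have hdZτ : G.dZ τ = (fun i => (n i : ℤ)) := by funext i; rw [dZ, hdτ]
      rw [hσ, hσ, hdZμ, hdZθ, hdZτ, hK]
      set aZ : Fin k → ℤ := fun i => (a i : ℤ)
      set bZ : Fin k → ℤ := fun i => (b i : ℤ)
      set nZ : Fin k → ℤ := fun i => (n i : ℤ)
      have hsplit : c aZ nZ = c (aZ - bZ) nZ * c bZ nZ := by
        rw [← hc_add_left, sub_add_cancel]
      rw [hsplit, map_mul, mul_assoc, norm_one_conj_mul (hc_norm _ _), mul_one]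
    have hss : ∀ w : ℂ, star ((starRingEnd ℂ) w) = w := fun w => by
      rw [starRingEnd_apply, star_star]
    calc t (G.comp μ τ) * star (t (G.thExt th a (G.comp μ τ)))
        = ((starRingEnd ℂ) (σ.c μ τ) • (t μ * t τ)) *
            (σ.c (th μ) τ • (star (t τ) * star (t (th μ)))) := by
          rw [thExt_comp th a hdμ hsμτ, t_comp htck hsμτ, t_comp htck hsθτ, star_smul,
            hss, star_mul]
      _ = ((starRingEnd ℂ) (σ.c μ τ) * σ.c (th μ) τ) •
            ((t μ * t τ) * (star (t τ) * star (t (th μ)))) := by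
          rw [smul_mul_assoc, mul_smul_comm, smul_smul]
      _ = K • (t μ * (t τ * star (t τ)) * star (t (th μ))) := by
          rw [hscal, mul_assoc (t μ) (t τ), ← mul_assoc (t τ), ← mul_assoc (t μ)]
  rw [Finset.sum_congr rfl hterm, ← Finset.smul_sum]
  congr 1
  rw [← Finset.sum_mul, ← Finset.mul_sum]
  have hCK := hck.2 (G.s μ) n (Fsrc μ) vertex_s (by rw [hFsrc]; exact Set.Finite.coe_toFinset _)
  rw [hCK, t_mul_s htck μ]

/-- Pairing identity: composing two partial unitaries at matching levels. -/
lemma pair_mul (hck : G.IsCKrf σ t) {v : G.Path} {a b e : Fin k → ℕ}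
    {th₁ th₂ : G.Path → G.Path}
    (hth₁ : G.ThFam v a b th₁) (hth₂ : G.ThFam v b e th₂)
    (Fa Fb : Finset G.Path) (hFa : (Fa : Set G.Path) = {l | G.r l = v ∧ G.d l = a})
    (hFb : (Fb : Set G.Path) = {l | G.r l = v ∧ G.d l = b}) :
    (∑ μ ∈ Fa, t μ * star (t (th₁ μ))) * (∑ ξ ∈ Fb, t ξ * star (t (th₂ ξ))) =
      ∑ μ ∈ Fa, t μ * star (t (th₂ (th₁ μ))) := by
  have htck := hck.1
  have hmemFa : ∀ {l : G.Path}, l ∈ Fa ↔ G.r l = v ∧ G.d l = a := fun {l} => by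
    rw [← Finset.mem_coe, hFa]; exact Iff.rfl
  have hmemFb : ∀ {l : G.Path}, l ∈ Fb ↔ G.r l = v ∧ G.d l = b := fun {l} => by
    rw [← Finset.mem_coe, hFb]; exact Iff.rfl
  rw [Finset.sum_mul]
  apply Finset.sum_congr rfl
  intro μ hμ
  obtain ⟨hrμ, hdμ⟩ := hmemFa.mp hμ
  obtain ⟨hr1, hd1, hs1, -⟩ := hth₁ μ hrμ hdμ
  obtain ⟨hr2, hd2, hs2, -⟩ := hth₂ (th₁ μ) hr1 hd1
  rw [Finset.mul_sum]
  have h0 : ∀ ξ ∈ Fb, ξ ≠ th₁ μ →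
      (t μ * star (t (th₁ μ))) * (t ξ * star (t (th₂ ξ))) = 0 := by
    intro ξ hξ hne
    obtain ⟨hrξ, hdξ⟩ := hmemFb.mp hξ
    rw [mul_assoc, ← mul_assoc (star (t (th₁ μ))),
      star_mul_of_ne htck (hd1.trans hdξ.symm) (fun hh => hne hh.symm), zero_mul, mul_zero]
  rw [Finset.sum_eq_single_of_mem (th₁ μ) (hmemFb.mpr ⟨hr1, hd1⟩) h0]
  calc (t μ * star (t (th₁ μ))) * (t (th₁ μ) * star (t (th₂ (th₁ μ))))
      = t μ * ((star (t (th₁ μ)) * t (th₁ μ)) * star (t (th₂ (th₁ μ)))) := by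
        rw [mul_assoc, ← mul_assoc (star (t (th₁ μ)))]
    _ = t μ * (t (G.s (th₁ μ)) * star (t (th₂ (th₁ μ)))) := by rw [htck.2.2.2.1 (th₁ μ)]
    _ = t μ * star (t (th₂ (th₁ μ))) := by
        rw [show G.s (th₁ μ) = G.s (th₂ (th₁ μ)) from hs2.symm, ts_mul_star htck]

/-- The projection `t_λ t_λ^*` commutes with the partial unitaries. -/
lemma q_comm (hrf : G.RowFiniteNoSources) (hck : G.IsCKrf σ t)
    (hσ : ∀ μ ν : G.Path, σ.c μ ν = c (G.dZ μ) (G.dZ ν))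
    (hc_norm : ∀ m n : Fin k → ℤ, ‖c m n‖ = 1)
    (hc_add_left : ∀ m m' n : Fin k → ℤ, c (m + m') n = c m n * c m' n)
    {v : G.Path} (hv : G.IsVertex v) (lam : G.Path)
    {a b : Fin k → ℕ} {th : G.Path → G.Path} (hth : G.ThFam v a b th)
    (Fa : Finset G.Path) (hFa : (Fa : Set G.Path) = {l | G.r l = v ∧ G.d l = a}) :
    (t lam * star (t lam)) * ∑ μ ∈ Fa, t μ * star (t (th μ)) =
      (∑ μ ∈ Fa, t μ * star (t (th μ))) * (t lam * star (t lam)) := by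
  have htck := hck.1
  set n := G.d lam with hn
  set Fan := (hrf v hv (a + n)).1.toFinset with hFanDef
  have hFan : (Fan : Set G.Path) = {l | G.r l = v ∧ G.d l = a + n} := Set.Finite.coe_toFinset _
  have hLR := level_raise hrf hck hσ hc_norm hc_add_left hv a b n hth Fa Fan hFa hFan
  have hXa : c ((fun i => (a i : ℤ)) - fun i => (b i : ℤ)) (fun i => (n i : ℤ)) •
      (∑ ν ∈ Fan, t ν * star (t (G.thExt th a ν))) = ∑ μ ∈ Fa, t μ * star (t (th μ)) := by
    rw [hLR, smul_smul, mul_comm, norm_one_conj_mul (hc_norm _ _), one_smul]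
  rw [← hXa, mul_smul_comm, smul_mul_assoc]
  congr 1
  rw [Finset.mul_sum, Finset.sum_mul]
  apply Finset.sum_congr rfl
  intro ν hν
  have hν' : G.r ν = v ∧ G.d ν = a + n := by
    rw [← Finset.mem_coe, hFan] at hν; exact hν
  obtain ⟨hΘr, hΘd, hΘs, hΘp⟩ := thExt_fam n hth ν hν'.1 hν'.2
  have hQstar : star (t lam * star (t lam)) = t lam * star (t lam) := by
    rw [star_mul, star_star]
  have hdlv : G.d lam ≤ G.d ν := by
    intro i; rw [hν'.2]; simp only [Pi.add_apply]; rw [hn]; omega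
  have hdlt : G.d lam ≤ G.d (G.thExt th a ν) := by
    intro i; rw [hΘd]; simp only [Pi.add_apply]; rw [hn]; omega
  by_cases hpre : ∃ β, G.s lam = G.r β ∧ G.comp lam β = ν
  · have hpre2 : ∃ β, G.s lam = G.r β ∧ G.comp lam β = G.thExt th a ν :=
      prefix_transfer hrf hΘp hdlt hpre
    obtain ⟨β, hβ1, hβ2⟩ := hpre
    obtain ⟨γ, hγ1, hγ2⟩ := hpre2
    have hR : star (t (G.thExt th a ν)) * (t lam * star (t lam)) =
        star (t (G.thExt th a ν)) := by
      rw [← hQstar, ← star_mul, q_mul_t_of_prefix htck hγ1 hγ2]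
    rw [← mul_assoc, q_mul_t_of_prefix htck hβ1 hβ2, mul_assoc, hR]
  · have hpre2 : ¬ ∃ β, G.s lam = G.r β ∧ G.comp lam β = G.thExt th a ν := by
      intro hcon
      exact hpre (prefix_transfer hrf (pequiv_symm hΘp hΘs.symm) hdlv hcon)
    have hR : star (t (G.thExt th a ν)) * (t lam * star (t lam)) = 0 := by
      rw [← hQstar, ← star_mul, q_mul_t_of_not_prefix htck hdlt hpre2, star_zero]
    rw [← mul_assoc, q_mul_t_of_not_prefix htck hdlv hpre, zero_mul, mul_assoc, hR, mul_zero]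

end BigLemmas

end KGraph


/-- the commutation relation `V V' = c(m,m') conj(c(m',m)) V' V` for the
unitaries built from the bijections `θ_{p,q}` and a bicharacter `c` of `ℤ^k`. -/
theorem stmt18 {k : ℕ} (G : KGraph k) (hrf : G.RowFiniteNoSources)
    (c : (Fin k → ℤ) → (Fin k → ℤ) → ℂ)
    (hc_norm : ∀ m n : Fin k → ℤ, ‖c m n‖ = 1)
    (hc_add_left : ∀ m m' n : Fin k → ℤ, c (m + m') n = c m n * c m' n)
    (hc_add_right : ∀ m n n' : Fin k → ℤ, c m (n + n') = c m n * c m n')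
    (σ : G.Cocycle) (hσ : ∀ μ ν : G.Path, σ.c μ ν = c (G.dZ μ) (G.dZ ν))
    {A : Type*} [NonUnitalNormedRing A] [StarRing A] [CStarRing A]
    [NormedSpace ℂ A] [IsScalarTower ℂ A A] [SMulCommClass ℂ A A]
    [StarModule ℂ A] [CompleteSpace A]
    (t : G.Path → A) (ht : G.IsCKrf σ t)
    (lam : G.Path) (hv : G.r lam ∈ G.HPer)
    (m m' : Fin k → ℤ) (hm : m ∈ G.PerGroup) (hm' : m' ∈ G.PerGroup)
    (p q p' q' : Fin k → ℕ)
    (hpq : (fun i => (p i : ℤ)) - (fun i => (q i : ℤ)) = m)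
    (hpq' : (fun i => (p' i : ℤ)) - (fun i => (q' i : ℤ)) = m')
    (θ θ' : G.Path → G.Path)
    (hθ : ∀ μ : G.Path, G.r μ = G.r lam → G.d μ = p →
      G.r (θ μ) = G.r lam ∧ G.d (θ μ) = q ∧ G.s (θ μ) = G.s μ ∧ G.PEquiv μ (θ μ))
    (hθ' : ∀ μ : G.Path, G.r μ = G.r lam → G.d μ = p' →
      G.r (θ' μ) = G.r lam ∧ G.d (θ' μ) = q' ∧ G.s (θ' μ) = G.s μ ∧ G.PEquiv μ (θ' μ))
    (F F' : Finset G.Path)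
    (hF : (F : Set G.Path) = {μ | G.r μ = G.r lam ∧ G.d μ = p})
    (hF' : (F' : Set G.Path) = {μ | G.r μ = G.r lam ∧ G.d μ = p'}) :
    ∀ V V' : A,
      V = ∑ μ ∈ F, t lam * star (t lam) * (t μ * star (t (θ μ))) →
      V' = ∑ η ∈ F', t lam * star (t lam) * (t η * star (t (θ' η))) →
      V * V' = (c m m' * starRingEnd ℂ (c m' m)) • (V' * V) := by
  intro V V' hV hV'
  have hvv : G.IsVertex (G.r lam) := hv.1
  have hθf : G.ThFam (G.r lam) p q θ := by intro μ h1 h2; exact hθ μ h1 h2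
  have hθ'f : G.ThFam (G.r lam) p' q' θ' := by intro μ h1 h2; exact hθ' μ h1 h2
  have htck := ht.1
  set Q : A := t lam * star (t lam) with hQ
  set W : A := ∑ μ ∈ F, t μ * star (t (θ μ)) with hWdef
  set W' : A := ∑ η ∈ F', t η * star (t (θ' η)) with hW'def
  have hVQ : V = Q * W := by rw [hV, hWdef, Finset.mul_sum]
  have hV'Q : V' = Q * W' := by rw [hV', hW'def, Finset.mul_sum]
  have hcW : Q * W = W * Q := KGraph.q_comm hrf ht hσ hc_norm hc_add_left hvv lam hθf F hF
  have hcW' : Q * W' = W' * Q := KGraph.q_comm hrf ht hσ hc_norm hc_add_left hvv lam hθ'f F' hF'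
  -- finsets at the composite levels
  set FN := (hrf (G.r lam) hvv (p + p')).1.toFinset with hFNdef
  have hFN : (FN : Set G.Path) = {l | G.r l = G.r lam ∧ G.d l = p + p'} :=
    Set.Finite.coe_toFinset _
  have hFN' : (FN : Set G.Path) = {l | G.r l = G.r lam ∧ G.d l = p' + p} := by
    rw [add_comm p' p]; exact hFN
  set Fb1 := (hrf (G.r lam) hvv (p' + q)).1.toFinset with hFb1def
  have hFb1 : (Fb1 : Set G.Path) = {l | G.r l = G.r lam ∧ G.d l = p' + q} :=
    Set.Finite.coe_toFinset _
  have hFb1' : (Fb1 : Set G.Path) = {l | G.r l = G.r lam ∧ G.d l = q + p'} := by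
    rw [add_comm q p']; exact hFb1
  set Fb2 := (hrf (G.r lam) hvv (p + q')).1.toFinset with hFb2def
  have hFb2 : (Fb2 : Set G.Path) = {l | G.r l = G.r lam ∧ G.d l = p + q'} :=
    Set.Finite.coe_toFinset _
  have hFb2' : (Fb2 : Set G.Path) = {l | G.r l = G.r lam ∧ G.d l = q' + p} := by
    rw [add_comm q' p]; exact hFb2
  -- extended families
  set Θa := G.thExt θ p with hΘa
  set Θb := G.thExt θ' p' with hΘb
  have hA1 : G.ThFam (G.r lam) (p + p') (q + p') Θa := KGraph.thExt_fam p' hθf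
  have hA2 : G.ThFam (G.r lam) (p + q') (q + q') Θa := KGraph.thExt_fam q' hθf
  have hA2' : G.ThFam (G.r lam) (q' + p) (q + q') Θa := by
    rw [add_comm q' p]; exact hA2
  have hB1 : G.ThFam (G.r lam) (p' + q) (q' + q) Θb := KGraph.thExt_fam q hθ'f
  have hB1' : G.ThFam (G.r lam) (q + p') (q' + q) Θb := by
    rw [add_comm q p']; exact hB1
  have hB2 : G.ThFam (G.r lam) (p' + p) (q' + p) Θb := KGraph.thExt_fam p hθ'f
  -- level raising identities
  have hLR1 := KGraph.level_raise hrf ht hσ hc_norm hc_add_left hvv p q p' hθf F FN hF hFN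
  have hLR2 := KGraph.level_raise hrf ht hσ hc_norm hc_add_left hvv p' q' q hθ'f F' Fb1 hF' hFb1
  have hLR3 := KGraph.level_raise hrf ht hσ hc_norm hc_add_left hvv p' q' p hθ'f F' FN hF' hFN'
  have hLR4 := KGraph.level_raise hrf ht hσ hc_norm hc_add_left hvv p q q' hθf F Fb2 hF hFb2
  rw [hpq] at hLR1 hLR4
  rw [hpq'] at hLR2 hLR3
  have hW1 : c m (fun i => (p' i : ℤ)) • (∑ ν ∈ FN, t ν * star (t (Θa ν))) = W := by
    rw [hLR1, smul_smul, mul_comm, KGraph.norm_one_conj_mul (hc_norm _ _), one_smul]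
  have hW'1 : c m' (fun i => (q i : ℤ)) • (∑ ξ ∈ Fb1, t ξ * star (t (Θb ξ))) = W' := by
    rw [hLR2, smul_smul, mul_comm, KGraph.norm_one_conj_mul (hc_norm _ _), one_smul]
  have hW'2 : c m' (fun i => (p i : ℤ)) • (∑ ν ∈ FN, t ν * star (t (Θb ν))) = W' := by
    rw [hLR3, smul_smul, mul_comm, KGraph.norm_one_conj_mul (hc_norm _ _), one_smul]
  have hW2 : c m (fun i => (q' i : ℤ)) • (∑ ξ ∈ Fb2, t ξ * star (t (Θa ξ))) = W := by
    rw [hLR4, smul_smul, mul_comm, KGraph.norm_one_conj_mul (hc_norm _ _), one_smul]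
  -- pairing identities
  have hP1 := KGraph.pair_mul ht hA1 hB1' FN Fb1 hFN hFb1'
  have hP2 := KGraph.pair_mul ht hB2 hA2' FN Fb2 hFN' hFb2'
  -- the two composite maps agree pointwise on FN
  have hpoint : ∀ ν ∈ FN, Θb (Θa ν) = Θa (Θb ν) := by
    intro ν hν
    have hν' : G.r ν = G.r lam ∧ G.d ν = p + p' := by
      rw [← Finset.mem_coe, hFN] at hν; exact hν
    obtain ⟨hx1r, hx1d, hx1s, hx1p⟩ := hA1 ν hν'.1 hν'.2
    obtain ⟨hx2r, hx2d, hx2s, hx2p⟩ := hB1' (Θa ν) hx1r hx1d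
    obtain ⟨hy1r, hy1d, hy1s, hy1p⟩ := hB2 ν hν'.1 (by rw [hν'.2, add_comm])
    obtain ⟨hy2r, hy2d, hy2s, hy2p⟩ := hA2' (Θb ν) hy1r hy1d
    have hνx2 : G.PEquiv ν (Θb (Θa ν)) := KGraph.pequiv_trans hx1p hx2p hx1s.symm
    have hνy2 : G.PEquiv ν (Θa (Θb ν)) := KGraph.pequiv_trans hy1p hy2p hy1s.symm
    have hsx2 : G.s ν = G.s (Θb (Θa ν)) := (hx2s.trans hx1s).symm
    have hsy2 : G.s ν = G.s (Θa (Θb ν)) := (hy2s.trans hy1s).symm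
    have hfin : G.PEquiv (Θb (Θa ν)) (Θa (Θb ν)) :=
      KGraph.pequiv_trans (KGraph.pequiv_symm hνx2 hsx2) hνy2 hsx2.symm
    exact KGraph.pequiv_eq hrf hfin (by rw [hx2d, hy2d, add_comm]) (hsx2.symm.trans hsy2)
  have hSeq : ∑ ν ∈ FN, t ν * star (t (Θb (Θa ν))) =
      ∑ ν ∈ FN, t ν * star (t (Θa (Θb ν))) :=
    Finset.sum_congr rfl (fun ν hν => by rw [hpoint ν hν])
  -- the two products
  have hWW' : W * W' = (c m (fun i => (p' i : ℤ)) * c m' (fun i => (q i : ℤ))) •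
      ∑ ν ∈ FN, t ν * star (t (Θb (Θa ν))) := by
    rw [← hW1, ← hW'1, smul_mul_assoc, mul_smul_comm, smul_smul, hP1]
  have hW'W : W' * W = (c m' (fun i => (p i : ℤ)) * c m (fun i => (q' i : ℤ))) •
      ∑ ν ∈ FN, t ν * star (t (Θa (Θb ν))) := by
    rw [← hW'2, ← hW2, smul_mul_assoc, mul_smul_comm, smul_smul, hP2]
  -- scalar identity
  have pZeq : (fun i => (p i : ℤ)) = m + (fun i => (q i : ℤ)) := by
    rw [← hpq]; funext i; simp
  have p'Zeq : (fun i => (p' i : ℤ)) = m' + (fun i => (q' i : ℤ)) := by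
    rw [← hpq']; funext i; simp
  have hz : c m (fun i => (p' i : ℤ)) * c m' (fun i => (q i : ℤ)) =
      (c m m' * (starRingEnd ℂ) (c m' m)) *
        (c m' (fun i => (p i : ℤ)) * c m (fun i => (q' i : ℤ))) := by
    rw [p'Zeq, pZeq, hc_add_right, hc_add_right]
    have h1 : (starRingEnd ℂ) (c m' m) * c m' m = 1 := KGraph.norm_one_conj_mul (hc_norm m' m)
    calc c m m' * c m (fun i => (q' i : ℤ)) * c m' (fun i => (q i : ℤ))
        = (c m m' * c m (fun i => (q' i : ℤ)) * c m' (fun i => (q i : ℤ))) *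
            ((starRingEnd ℂ) (c m' m) * c m' m) := by rw [h1, mul_one]
      _ = (c m m' * (starRingEnd ℂ) (c m' m)) *
            (c m' m * c m' (fun i => (q i : ℤ)) * c m (fun i => (q' i : ℤ))) := by ring
  have hfinal : W * W' = (c m m' * (starRingEnd ℂ) (c m' m)) • (W' * W) := by
    rw [hWW', hSeq, hz, mul_smul, ← hW'W]
  -- assemble
  have hback : V' * V = Q * ((W' * W) * Q) := by
    rw [hVQ, hV'Q, mul_assoc, hcW, ← mul_assoc W' W Q]
  calc V * V' = (Q * W) * (Q * W') := by rw [hVQ, hV'Q]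
    _ = Q * (W * (Q * W')) := by rw [mul_assoc]
    _ = Q * (W * (W' * Q)) := by rw [hcW']
    _ = Q * ((W * W') * Q) := by rw [← mul_assoc W W' Q]
    _ = Q * (((c m m' * (starRingEnd ℂ) (c m' m)) • (W' * W)) * Q) := by rw [hfinal]
    _ = (c m m' * (starRingEnd ℂ) (c m' m)) • (Q * ((W' * W) * Q)) := by
        rw [smul_mul_assoc, mul_smul_comm]
    _ = (c m m' * (starRingEnd ℂ) (c m' m)) • (V' * V) := by rw [hback]
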